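/- Let k ≥ 2 and n ≥ 1 be natural numbers with n < ln(k!)/(2·ln k). Then for every family of k points d₁, …, d_k in ℝⁿ there exists a permutation π of {1, …, k} such that no point q ∈ ℝⁿ satisfies ‖q − d_{π(1)}‖₂ < ‖q − d_{π(2)}‖₂ < ⋯ < ‖q − d_{π(k)}‖₂. Consequently, no dual encoder with embedding dimension n (which scores a query–document pair by the negated Euclidean distance between their embeddings) can solve a complete ranking task over a corpus of k documents. -/

import Mathlib

open Finset

/-- Orthant avoidance: if `a ≠ 0`, there is a sign pattern `S` such that no vector `x`
which is positive on `S` and nonpositive off `S` satisfies `∑ a p * x p = b`. -/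
lemma orthant_lemma {ι : Type*} [Fintype ι] [DecidableEq ι] (a : ι → ℝ) (b : ℝ)
    (ha : ∃ j, a j ≠ 0) :
    ∃ S : Finset ι, ∀ x : ι → ℝ, (∀ p ∈ S, 0 < x p) → (∀ p ∉ S, x p ≤ 0) →
      ∑ p, a p * x p ≠ b := by
  classical
  obtain ⟨j, hj⟩ := ha
  rcases hj.lt_or_gt with haj | haj
  · rcases le_or_gt 0 b with hb | hb
    · -- a j < 0, 0 ≤ b : take S = {p | a p < 0}, then the sum is < 0
      refine ⟨univ.filter (fun p => a p < 0), fun x hpos hneg hsum => ?_⟩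
      have hlt : ∑ p, a p * x p < ∑ p : ι, (0 : ℝ) := by
        refine Finset.sum_lt_sum (fun p _ => ?_) ⟨j, Finset.mem_univ _, ?_⟩
        · by_cases hp : a p < 0
          · exact mul_nonpos_iff.2 (Or.inr ⟨hp.le, (hpos p (by simp [hp])).le⟩)
          · exact mul_nonpos_iff.2 (Or.inl ⟨le_of_not_gt hp, hneg p (by simp [hp])⟩)
        · exact mul_neg_of_neg_of_pos haj (hpos j (by simp [haj]))
      simp only [Finset.sum_const, smul_zero] at hlt
      exact absurd hsum (by linarith)
    · -- a j < 0, b < 0 : take S = {p | 0 < a p}, then the sum is ≥ 0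
      refine ⟨univ.filter (fun p => 0 < a p), fun x hpos hneg hsum => ?_⟩
      have hge : (0:ℝ) ≤ ∑ p, a p * x p := by
        refine Finset.sum_nonneg (fun p _ => ?_)
        by_cases hp : 0 < a p
        · exact mul_nonneg hp.le (hpos p (by simp [hp])).le
        · exact mul_nonneg_iff.2 (Or.inr ⟨le_of_not_gt hp, hneg p (by simp [hp])⟩)
      exact absurd hsum (by linarith)
  · rcases le_or_gt b 0 with hb | hb
    · -- 0 < a j, b ≤ 0 : take S = {p | 0 < a p}, then the sum is > 0
      refine ⟨univ.filter (fun p => 0 < a p), fun x hpos hneg hsum => ?_⟩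
      have hlt : ∑ p : ι, (0:ℝ) < ∑ p, a p * x p := by
        refine Finset.sum_lt_sum (fun p _ => ?_) ⟨j, Finset.mem_univ _, ?_⟩
        · by_cases hp : 0 < a p
          · exact mul_nonneg hp.le (hpos p (by simp [hp])).le
          · exact mul_nonneg_iff.2 (Or.inr ⟨le_of_not_gt hp, hneg p (by simp [hp])⟩)
        · exact mul_pos haj (hpos j (by simp [haj]))
      simp only [Finset.sum_const, smul_zero] at hlt
      exact absurd hsum (by linarith)
    · -- 0 < a j, 0 < b : take S = {p | a p < 0}, then the sum is ≤ 0
      refine ⟨univ.filter (fun p => a p < 0), fun x hpos hneg hsum => ?_⟩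
      have hle : ∑ p, a p * x p ≤ 0 := by
        refine Finset.sum_nonpos (fun p _ => ?_)
        by_cases hp : a p < 0
        · exact mul_nonpos_iff.2 (Or.inr ⟨hp.le, (hpos p (by simp [hp])).le⟩)
        · exact mul_nonpos_iff.2 (Or.inl ⟨le_of_not_gt hp, hneg p (by simp [hp])⟩)
      exact absurd hsum (by linarith)

lemma sum_pow_le_succ_pow (m n : ℕ) : ∑ j ∈ Finset.range (n+1), m^j ≤ (m+1)^n := by
  induction n with
  | zero => simp
  | succ n ih =>
    rw [Finset.sum_range_succ']
    have h1 : ∑ i ∈ Finset.range (n+1), m ^ (i+1) = m * ∑ i ∈ Finset.range (n+1), m ^ i := by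
      rw [Finset.mul_sum]
      exact Finset.sum_congr rfl fun i _ => by ring
    have h2 : (1:ℕ) ≤ (m+1)^n := Nat.one_le_pow _ _ (Nat.succ_pos m)
    calc ∑ i ∈ Finset.range (n+1), m ^ (i+1) + m ^ 0
        = m * (∑ i ∈ Finset.range (n+1), m ^ i) + 1 := by rw [h1]; simp
      _ ≤ m * (m+1)^n + (m+1)^n := by
          have := Nat.mul_le_mul_left m ih
          omega
      _ = (m+1)^(n+1) := by ring

theorem de_insufficiency_for_complete_ranking
    (k n : ℕ) (hk : 2 ≤ k) (hn : 1 ≤ n)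
    (hdim : (n : ℝ) < Real.log (Nat.factorial k) / (2 * Real.log k)) :
    ∀ d : Fin k → EuclideanSpace ℝ (Fin n),
      ∃ π : Equiv.Perm (Fin k),
        ¬ ∃ q : EuclideanSpace ℝ (Fin n),
            StrictMono (fun i : Fin k => ‖q - d (π i)‖) := by
  classical
  intro d
  by_contra hcon
  push_neg at hcon
  choose q hq using hcon
  -- the affine "score" functions: ordering by distance = ordering of g i
  set g : Fin k → EuclideanSpace ℝ (Fin n) → ℝ :=
    fun i v => ‖d i‖^2 - 2 * inner ℝ v (d i) with hgdef
  have key : ∀ (π : Equiv.Perm (Fin k)) (a b : Fin k), a < b →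
      g (π a) (q π) < g (π b) (q π) := by
    intro π a b hab
    have h1 : ‖q π - d (π a)‖ < ‖q π - d (π b)‖ := hq π hab
    have h2 : ‖q π - d (π a)‖^2 < ‖q π - d (π b)‖^2 :=
      pow_lt_pow_left₀ h1 (norm_nonneg _) (by norm_num)
    rw [norm_sub_sq_real, norm_sub_sq_real] at h2
    simp only [hgdef]
    linarith
  -- ground type : strictly ordered pairs
  let α := {p : Fin k × Fin k // p.1 < p.2}
  -- sign pattern of the witness of π
  let A : Equiv.Perm (Fin k) → Finset α :=
    fun π => univ.filter (fun p : α => g p.1.1 (q π) < g p.1.2 (q π))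
  have hmem : ∀ (π : Equiv.Perm (Fin k)) (p : α),
      p ∈ A π ↔ π.symm p.1.1 < π.symm p.1.2 := by
    intro π p
    simp only [A, Finset.mem_filter, Finset.mem_univ, true_and]
    constructor
    · intro hlt
      by_contra hcon'
      push_neg at hcon'
      rcases hcon'.lt_or_eq with h | h
      · have := key π _ _ h
        simp only [Equiv.apply_symm_apply] at this
        linarith
      · have : p.1.1 = p.1.2 := by
          have := congrArg π h
          simpa [Equiv.apply_symm_apply] using this.symm
        exact absurd p.2 (by rw [this]; exact lt_irrefl _)
    · intro hlt
      have := key π _ _ hlt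
      simpa [Equiv.apply_symm_apply] using this
  have hinj : Function.Injective A := by
    have instwf : WellFoundedLT (Fin k) := inferInstance
    intro π σ hAB
    have horder : ∀ i j : Fin k, π.symm i < π.symm j → σ.symm i < σ.symm j := by
      intro i j hij
      have hne : i ≠ j := by
        intro h; rw [h] at hij; exact lt_irrefl _ hij
      rcases hne.lt_or_gt with h | h
      · have h1 : (⟨(i,j), h⟩ : α) ∈ A π := (hmem π _).2 hij
        rw [hAB] at h1
        exact (hmem σ _).1 h1
      · have h1 : (⟨(j,i), h⟩ : α) ∉ A π := by
          intro hmem'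
          have := (hmem π _).1 hmem'
          exact absurd hij (by simpa using this.asymm)
        rw [hAB] at h1
        have h2 : ¬ σ.symm j < σ.symm i := fun hc => h1 ((hmem σ _).2 hc)
        have h3 : σ.symm i ≠ σ.symm j := fun hc => hne (σ.symm.injective hc)
        exact (le_of_not_gt h2).lt_of_ne h3
    have hmono : StrictMono (fun a => σ.symm (π a)) := by
      intro a b hab
      have := horder (π a) (π b) (by simpa using hab)
      simpa using this
    have hrange : Set.range (fun a => σ.symm (π a)) = Set.range (id : Fin k → Fin k) := by
      rw [Set.range_id]
      exact Set.range_eq_univ.2 fun y => ⟨π.symm (σ y), by simp⟩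
    have hri := @StrictMono.range_inj (Fin k) (Fin k) _ _ inferInstance _ _ hmono (strictMono_id (α := Fin k))
    have : (fun a => σ.symm (π a)) = id := hri.1 hrange
    refine Equiv.ext fun a => ?_
    have := congrFun this a
    simp only [id] at this
    calc π a = σ (σ.symm (π a)) := (σ.apply_symm_apply _).symm
      _ = σ a := by rw [this]
  -- the family of sign patterns
  set 𝒜 : Finset (Finset α) := Finset.univ.image A with h𝒜
  have hcard𝒜 : 𝒜.card = Nat.factorial k := by
    rw [h𝒜, Finset.card_image_of_injective _ hinj, Finset.card_univ, Fintype.card_perm,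
      Fintype.card_fin]
  -- every shattered set has size ≤ n
  have hvc : ∀ s : Finset α, 𝒜.Shatters s → s.card ≤ n := by
    intro s hs
    by_contra hcard
    push_neg at hcard
    obtain ⟨T, hTs, hTcard⟩ := Finset.exists_subset_card_eq (Nat.succ_le_of_lt hcard)
    have hTsh : 𝒜.Shatters T := hs.mono_right hTs
    -- the linear parts of the comparison functions indexed by T are dependent
    set v : T → EuclideanSpace ℝ (Fin n) := fun p => d p.1.1.1 - d p.1.1.2 with hvdef
    have hnotli : ¬ LinearIndependent ℝ v := by
      intro hli
      have hle := hli.fintype_card_le_finrank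
      rw [finrank_euclideanSpace_fin] at hle
      rw [Fintype.card_coe, hTcard] at hle
      omega
    obtain ⟨a, hsum0, j, hj⟩ := Fintype.not_linearIndependent_iff.1 hnotli
    set c : T → ℝ := fun p => ‖d p.1.1.2‖^2 - ‖d p.1.1.1‖^2 with hcdef
    set b : ℝ := ∑ p, a p * c p with hbdef
    obtain ⟨S, hS⟩ := orthant_lemma a b ⟨j, hj⟩
    set S' : Finset α := S.map (Function.Embedding.subtype _) with hS'def
    have hS'T : S' ⊆ T := by
      intro x hx
      simp only [hS'def, Finset.mem_map, Function.Embedding.coe_subtype] at hx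
      obtain ⟨y, _, rfl⟩ := hx
      exact y.2
    obtain ⟨u, hu𝒜, hTu⟩ := hTsh hS'T
    obtain ⟨π, -, hπ⟩ := Finset.mem_image.1 hu𝒜
    set x : T → ℝ := fun p => g p.1.1.2 (q π) - g p.1.1.1 (q π) with hxdef
    have hmemS' : ∀ p : T, (p : α) ∈ S' ↔ p ∈ S := by
      intro p
      simp only [hS'def, Finset.mem_map, Function.Embedding.coe_subtype]
      constructor
      · rintro ⟨y, hy, hyx⟩
        rwa [← Subtype.ext hyx]
      · intro hp; exact ⟨p, hp, rfl⟩
    have hxb : ∑ p, a p * x p = b := by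
      have hexp : ∀ p : T, x p = c p + 2 * inner ℝ (q π) (v p) := by
        intro p
        simp only [hxdef, hcdef, hvdef, hgdef, inner_sub_right]
        ring
      calc ∑ p, a p * x p
          = ∑ p, (a p * c p + 2 * (a p * inner ℝ (q π) (v p))) := by
            refine Finset.sum_congr rfl fun p _ => ?_
            rw [hexp p]; ring
        _ = (∑ p, a p * c p) + 2 * inner ℝ (q π) (∑ p, a p • v p) := by
            rw [Finset.sum_add_distrib, inner_sum]
            simp only [real_inner_smul_right]
            rw [Finset.mul_sum]
        _ = b := by rw [hsum0, inner_zero_right, ← hbdef]; ring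
    refine hS x ?_ ?_ hxb
    · intro p hp
      have hpS' : (p : α) ∈ S' := (hmemS' p).2 hp
      have hpu : (p : α) ∈ u := by
        have : (p : α) ∈ T ∩ u := hTu ▸ hpS'
        exact (Finset.mem_inter.1 this).2
      rw [← hπ] at hpu
      have := (Finset.mem_filter.1 hpu).2
      simp only [hxdef]
      linarith
    · intro p hp
      have hpS' : (p : α) ∉ S' := fun hc => hp ((hmemS' p).1 hc)
      have hpu : (p : α) ∉ u := by
        intro hc
        exact hpS' (hTu ▸ Finset.mem_inter.2 ⟨p.2, hc⟩)
      rw [← hπ] at hpu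
      have : ¬ g (p : α).1.1 (q π) < g (p : α).1.2 (q π) := by
        intro hc
        exact hpu (Finset.mem_filter.2 ⟨Finset.mem_univ _, hc⟩)
      simp only [hxdef]
      linarith [le_of_not_gt this]
  -- counting
  set m : ℕ := Fintype.card α with hmdef
  have hm : m + 1 ≤ k^2 := by
    have hlt : m < Fintype.card (Fin k × Fin k) := by
      refine Fintype.card_subtype_lt (x := ((⟨0, by omega⟩ : Fin k), (⟨0, by omega⟩ : Fin k))) ?_
      simp
    rw [Fintype.card_prod, Fintype.card_fin] at hlt
    have : k * k = k^2 := (sq k).symm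
    omega
  have hvcn : 𝒜.vcDim ≤ n := by
    refine Finset.sup_le fun s hs => hvc s (Finset.mem_shatterer.1 hs)
  have hIic : (Finset.Iic n : Finset ℕ) = Finset.range (n+1) := by
    ext j; simp [Nat.lt_succ_iff]
  have hcount : Nat.factorial k ≤ k^(2*n) := by
    calc Nat.factorial k = 𝒜.card := hcard𝒜.symm
      _ ≤ 𝒜.shatterer.card := Finset.card_le_card_shatterer _
      _ ≤ ∑ j ∈ Finset.Iic 𝒜.vcDim, m.choose j := Finset.card_shatterer_le_sum_vcDim
      _ ≤ ∑ j ∈ Finset.Iic n, m.choose j :=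
          Finset.sum_le_sum_of_subset (Finset.Iic_subset_Iic.2 hvcn)
      _ = ∑ j ∈ Finset.range (n+1), m.choose j := by rw [hIic]
      _ ≤ ∑ j ∈ Finset.range (n+1), m^j :=
          Finset.sum_le_sum fun j _ => Nat.choose_le_pow m j
      _ ≤ (m+1)^n := sum_pow_le_succ_pow m n
      _ ≤ (k^2)^n := Nat.pow_le_pow_left hm n
      _ = k^(2*n) := by rw [← pow_mul]
  -- numeric contradiction
  have hk1 : (1:ℝ) < k := by exact_mod_cast hk.trans_lt' one_lt_two
  have hlogk : 0 < Real.log k := Real.log_pos hk1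
  have h2 : (n:ℝ) * (2 * Real.log k) < Real.log (Nat.factorial k) :=
    (lt_div_iff₀ (by positivity)).1 hdim
  have hloglt : Real.log ((k:ℝ)^(2*n)) < Real.log ((Nat.factorial k : ℕ) : ℝ) := by
    rw [Real.log_pow]
    push_cast
    linarith
  have hfinR : (k:ℝ)^(2*n) < ((Nat.factorial k : ℕ) : ℝ) := by
    have hx : (0:ℝ) < (k:ℝ)^(2*n) := by positivity
    have hy : (0:ℝ) < ((Nat.factorial k : ℕ) : ℝ) := by
      exact_mod_cast Nat.factorial_pos k
    exact (Real.log_lt_log_iff hx hy).1 hloglt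
  have hfin : k^(2*n) < Nat.factorial k := by exact_mod_cast hfinR
  omega
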